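/- Let ℓ ≥ 1 and let G be the AND_ℓ-gadget with in-terminals B = {b₀,…,b_{2^ℓ−1}} and out-terminals a₀, a₁. Let π be a stable partition of V(G) such that B is π-closed and the partition induced by π on B is a partition into binary blocks. If a₀ ≈_π a₁, then there exists an in-terminal pair that is not distinguished, i.e. some 0 ≤ p < 2^{ℓ−1} with b_{2p} ≈_π b_{2p+1}. -/

import Mathlib

/-- The number of neighbours of `u` in the cell of `w` of the partition `π`. -/
noncomputable def cellDeg {V : Type*} (G : SimpleGraph V) (π : Setoid V) (u w : V) : ℕ :=
  (G.neighborSet u ∩ {x | π.r x w}).ncard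

/-- The partition (given as a setoid) `π` is stable for the graph `G`:
any two vertices in a common cell have the same number of neighbours in every cell. -/
def IsStable {V : Type*} (G : SimpleGraph V) (π : Setoid V) : Prop :=
  ∀ u v, π.r u v → ∀ w, cellDeg G π u w = cellDeg G π v w

/-- `S` is `π`-closed, i.e. a union of cells of `π`. -/
def Closed {V : Type*} (π : Setoid V) (S : Set V) : Prop :=
  ∀ u v, π.r u v → (u ∈ S ↔ v ∈ S)

/-- `ρ` refines `π`; this is the paper's `π ⪯ ρ`. -/
def Finer {V : Type*} (ρ π : Setoid V) : Prop :=
  ∀ u v, ρ.r u v → π.r u v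

/-- `C` is a cell of the partition `π`. -/
def IsCell {V : Type*} (π : Setoid V) (C : Set V) : Prop :=
  ∃ w, C = {x | π.r x w}

/-- `π'` is obtained from `π` by the refining operation `(R, S)` (for `π`-closed `R`, `S`):
cells disjoint from `S` are unchanged, and two vertices of `S` stay in a common cell iff
they were `π`-equivalent and have the same number of neighbours in every cell of `π`
contained in `R` (such cells are exactly the cells of the elements of `R`). -/
def IsRefineOp {V : Type*} (G : SimpleGraph V) (π : Setoid V) (R S : Set V)
    (π' : Setoid V) : Prop :=
  Closed π R ∧ Closed π S ∧
    ∀ u v, π'.r u v ↔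
      (π.r u v ∧ (u ∈ S → ∀ w ∈ R, cellDeg G π u w = cellDeg G π v w))

/-- The vertex type of the gadget `AND_ℓ`.  For `ℓ ∈ {0,1}` it is `Fin 4`
(`a₀ = 0`, `a₁ = 1`, `b₀ = 2`, `b₁ = 3`), for `ℓ = 2` it is `Fin 10`
(`a₀ = 0`, `a₁ = 1`, `b₀,…,b₃ = 2,…,5`, `c₀,…,c₃ = 6,…,9`) and for `ℓ ≥ 3` it is
the disjoint union of a copy of `AND₂` and two copies of `AND_{ℓ-1}`. -/
def ANDVert : ℕ → Type
  | 0 => Fin 4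
  | 1 => Fin 4
  | 2 => Fin 10
  | (n + 3) => Fin 10 ⊕ (ANDVert (n + 2) ⊕ ANDVert (n + 2))

/-- The out-terminal `a₀` of `AND_ℓ`. -/
def ANDa0 : (ℓ : ℕ) → ANDVert ℓ
  | 0 => (0 : Fin 4)
  | 1 => (0 : Fin 4)
  | 2 => (0 : Fin 10)
  | (_ + 3) => Sum.inl (0 : Fin 10)

/-- The out-terminal `a₁` of `AND_ℓ`. -/
def ANDa1 : (ℓ : ℕ) → ANDVert ℓ
  | 0 => (1 : Fin 4)
  | 1 => (1 : Fin 4)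
  | 2 => (1 : Fin 10)
  | (_ + 3) => Sum.inl (1 : Fin 10)

/-- The in-terminal `b_i` of `AND_ℓ` (only the values `i < 2^ℓ` are meaningful);
for `ℓ ≥ 3` the in-terminal sequence is the concatenation of the in-terminal
sequences of the two sub-gadgets. -/
def ANDb : (ℓ : ℕ) → ℕ → ANDVert ℓ
  | 0, _ => (2 : Fin 4)
  | 1, i => if i = 0 then (2 : Fin 4) else (3 : Fin 4)
  | 2, i => (match i with | 0 => 2 | 1 => 3 | 2 => 4 | _ => 5 : Fin 10)
  | (n + 3), i =>
      if i < 2 ^ (n + 2) then Sum.inr (Sum.inl (ANDb (n + 2) i))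
      else Sum.inr (Sum.inr (ANDb (n + 2) (i - 2 ^ (n + 2))))

/-- The edges of the gadget `AND₂` (the Cai–Fürer–Immerman gadget):
`a₀c₀, a₀c₁, a₁c₂, a₁c₃, b₀c₀, b₀c₂, b₁c₁, b₁c₃, b₂c₁, b₂c₂, b₃c₀, b₃c₃`. -/
def AND2rel (u v : Fin 10) : Prop :=
  (u, v) ∈ ([(0, 6), (0, 7), (1, 8), (1, 9), (2, 6), (2, 8), (3, 7), (3, 9),
             (4, 7), (4, 8), (5, 6), (5, 9)] : List (Fin 10 × Fin 10))

/-- The edge relation of the gadget `AND_ℓ`: for `ℓ = 1` the edges `a₀b₀, a₁b₁`; for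
`ℓ = 2` the CFI gadget; for `ℓ ≥ 3` the edges inside the three sub-gadgets together
with the four edges joining the in-terminal pairs `(b₀,b₁)` resp. `(b₂,b₃)` of the top
copy of `AND₂` to the out-terminals of the two copies of `AND_{ℓ-1}`. -/
def ANDrel : (ℓ : ℕ) → ANDVert ℓ → ANDVert ℓ → Prop
  | 0 => fun _ _ => False
  | 1 => fun u v => (u = (0 : Fin 4) ∧ v = (2 : Fin 4)) ∨ (u = (1 : Fin 4) ∧ v = (3 : Fin 4))
  | 2 => AND2rel
  | (n + 3) => fun u v =>
      match u, v with
      | Sum.inl x, Sum.inl y => AND2rel x y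
      | Sum.inr (Sum.inl x), Sum.inr (Sum.inl y) => ANDrel (n + 2) x y
      | Sum.inr (Sum.inr x), Sum.inr (Sum.inr y) => ANDrel (n + 2) x y
      | Sum.inl x, Sum.inr (Sum.inl y) =>
          (x = 2 ∧ y = ANDa0 (n + 2)) ∨ (x = 3 ∧ y = ANDa1 (n + 2))
      | Sum.inl x, Sum.inr (Sum.inr y) =>
          (x = 4 ∧ y = ANDa0 (n + 2)) ∨ (x = 5 ∧ y = ANDa1 (n + 2))
      | _, _ => False

/-- The gadget `AND_ℓ` as a simple graph. -/
def ANDgraph (ℓ : ℕ) : SimpleGraph (ANDVert ℓ) := SimpleGraph.fromRel (ANDrel ℓ)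

/-- The set of in-terminals of `AND_ℓ`. -/
def ANDins (ℓ : ℕ) : Set (ANDVert ℓ) := ANDb ℓ '' Set.Iio (2 ^ ℓ)

/-- The binary block of in-terminals `{b_i : q·2^(ℓ-j) ≤ i < (q+1)·2^(ℓ-j)}`. -/
def binBlock (ℓ j q : ℕ) : Set (ANDVert ℓ) :=
  ANDb ℓ '' Set.Ico (q * 2 ^ (ℓ - j)) ((q + 1) * 2 ^ (ℓ - j))

/-- `ψ` is a partition of the set of in-terminals of `AND_ℓ` into binary blocks. -/
def IsBinBlockPartition (ℓ : ℕ) (ψ : Set (Set (ANDVert ℓ))) : Prop :=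
  (∀ C ∈ ψ, ∃ j ≤ ℓ, ∃ q < 2 ^ j, C = binBlock ℓ j q) ∧
  ⋃₀ ψ = ANDins ℓ ∧ ψ.PairwiseDisjoint id

/-- The partition `ρ` of `V` refines the partition `ψ` of a subset of `V`
(that is, it refines `ψ ∪ {V ∖ ⋃₀ ψ}`). -/
def RefinesCells {V : Type*} (ρ : Setoid V) (ψ : Set (Set V)) : Prop :=
  ∀ u v, ρ.r u v → (∃ C ∈ ψ, u ∈ C ∧ v ∈ C) ∨ (u ∉ ⋃₀ ψ ∧ v ∉ ⋃₀ ψ)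

/-- The partition induced by `ρ` on `⋃₀ ψ` equals `ψ`. -/
def AgreesWith {V : Type*} (ρ : Setoid V) (ψ : Set (Set V)) : Prop :=
  ∀ u ∈ ⋃₀ ψ, ∀ v ∈ ⋃₀ ψ, (ρ.r u v ↔ ∃ C ∈ ψ, u ∈ C ∧ v ∈ C)

/-- `ρ` is the coarsest stable partition (for `G`) refining the partition `ψ`
of a subset of the vertex set. -/
def IsCoarsestStableRefining {V : Type*} (G : SimpleGraph V) (ψ : Set (Set V))
    (ρ : Setoid V) : Prop :=
  IsStable G ρ ∧ RefinesCells ρ ψ ∧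
    ∀ σ : Setoid V, IsStable G σ → RefinesCells σ ψ → Finer σ ρ


def lvD : ℕ → ℕ
  | 0 => 1
  | 1 => 1
  | 2 => 2
  | (n+3) => lvD (n+2) + 3

def lv : (ℓ : ℕ) → ANDVert ℓ → ℕ
  | 0, v => if (v : Fin 4).val < 2 then 1 else 0
  | 1, v => if (v : Fin 4).val < 2 then 1 else 0
  | 2, v => if (v : Fin 10).val < 2 then 2 else if (v : Fin 10).val < 6 then 0 else 1
  | (n+3), Sum.inl x => if x.val < 2 then lvD (n+2) + 3 else if x.val < 6 then lvD (n+2) + 1 else lvD (n+2) + 2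
  | (n+3), Sum.inr (Sum.inl x) => lv (n+2) x
  | (n+3), Sum.inr (Sum.inr x) => lv (n+2) x

def ANDadj (ℓ : ℕ) (u v : ANDVert ℓ) : Prop := ANDrel ℓ u v ∨ ANDrel ℓ v u

instance AND2rel.dec : ∀ u v, Decidable (AND2rel u v) := fun u v => by
  unfold AND2rel; infer_instance

theorem lv_b : ∀ (ℓ i : ℕ), lv ℓ (ANDb ℓ i) = 0
  | 0, i => by simp [ANDb, lv]
  | 1, i => by by_cases h : i = 0 <;> simp [ANDb, lv, h] <;> decide
  | 2, i => by
      match i with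
      | 0 => decide | 1 => decide | 2 => decide | (n+3) => simp [ANDb, lv]
  | (n+3), i => by
      by_cases h : i < 2^(n+2) <;> simp [ANDb, lv, h, lv_b (n+2)]

theorem lv_a0 : ∀ ℓ, lv ℓ (ANDa0 ℓ) = lvD ℓ
  | 0 => by decide
  | 1 => by decide
  | 2 => by decide
  | (n+3) => by simp [ANDa0, lv, lvD]

theorem lv_a1 : ∀ ℓ, lv ℓ (ANDa1 ℓ) = lvD ℓ
  | 0 => by decide
  | 1 => by decide
  | 2 => by decide
  | (n+3) => by simp [ANDa1, lv, lvD]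

theorem lvD_pos (ℓ : ℕ) : 1 ≤ lvD ℓ := by
  match ℓ with
  | 0 => decide
  | 1 => decide
  | 2 => decide
  | (n+3) => simp [lvD]

theorem lv_le : ∀ (ℓ : ℕ) (v : ANDVert ℓ), lv ℓ v ≤ lvD ℓ
  | 0, v => by simp [lv, lvD]; split <;> omega
  | 1, v => by simp [lv, lvD]; split <;> omega
  | 2, v => by simp [lv, lvD]; split <;> [omega; (split <;> omega)]
  | (n+3), v => by
      rcases v with x | x | x
      · simp only [lv, lvD]; split <;> [omega; (split <;> omega)]
      · have := lv_le (n+2) x; simp only [lv, lvD]; omega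
      · have := lv_le (n+2) x; simp only [lv, lvD]; omega

theorem a0_ne_a1 : ∀ ℓ, ANDa0 ℓ ≠ ANDa1 ℓ
  | 0 => fun h => absurd h (show (0:Fin 4) ≠ 1 by decide)
  | 1 => fun h => absurd h (show (0:Fin 4) ≠ 1 by decide)
  | 2 => fun h => absurd h (show (0:Fin 10) ≠ 1 by decide)
  | (n+3) => fun h => by
      rw [ANDa0, ANDa1] at h
      exact absurd (Sum.inl.inj h) (by decide)

theorem ANDVert1_eq {u v : Fin 4} (h : (u : ANDVert 1) = v) : u = v := h
theorem ANDVert2_eq {u v : Fin 10} (h : (u : ANDVert 2) = v) : u = v := h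

theorem pow_split (n : ℕ) : (2:ℕ)^(n+3) = 2^(n+2) + 2^(n+2) := by ring

theorem b_inj : ∀ (ℓ : ℕ), 1 ≤ ℓ → ∀ i < 2^ℓ, ∀ j < 2^ℓ, ANDb ℓ i = ANDb ℓ j → i = j
  | 0, h => by omega
  | 1, _ => by
      intro i hi j hj h
      interval_cases i <;> interval_cases j <;> simp_all [ANDb] <;>
        exact absurd (ANDVert1_eq h) (by decide)
  | 2, _ => by
      intro i hi j hj h
      interval_cases i <;> interval_cases j <;> simp_all [ANDb] <;>
        exact absurd (ANDVert2_eq h) (by decide)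
  | (n+3), _ => by
      intro i hi j hj h
      have hp := pow_split n
      by_cases h1 : i < 2^(n+2) <;> by_cases h2 : j < 2^(n+2) <;>
        simp only [ANDb, h1, h2, if_true, if_false, if_pos, if_neg, not_false_iff] at h
      · exact b_inj (n+2) (by omega) i h1 j h2 (Sum.inl.inj (Sum.inr.inj h))
      · exact absurd (Sum.inr.inj h) (by simp)
      · exact absurd (Sum.inr.inj h) (by simp)
      · have := b_inj (n+2) (by omega) (i - 2^(n+2)) (by omega) (j - 2^(n+2)) (by omega)
          (Sum.inr.inj (Sum.inr.inj h))
        omega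

theorem lv_eq_zero : ∀ (ℓ : ℕ), 1 ≤ ℓ → ∀ v : ANDVert ℓ, lv ℓ v = 0 → ∃ i < 2^ℓ, v = ANDb ℓ i
  | 0, h => by omega
  | 1, _ => by
      intro v hv
      rcases v with ⟨k, hk⟩
      interval_cases k
      · simp [lv] at hv
      · simp [lv] at hv
      · exact ⟨0, by norm_num, rfl⟩
      · exact ⟨1, by norm_num, rfl⟩
  | 2, _ => by
      intro v hv
      rcases v with ⟨k, hk⟩
      interval_cases k
      · simp [lv] at hv
      · simp [lv] at hv
      · exact ⟨0, by norm_num, rfl⟩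
      · exact ⟨1, by norm_num, rfl⟩
      · exact ⟨2, by norm_num, rfl⟩
      · exact ⟨3, by norm_num, rfl⟩
      · simp [lv] at hv
      · simp [lv] at hv
      · simp [lv] at hv
      · simp [lv] at hv
  | (n+3), _ => by
      intro v hv
      have hp := pow_split n
      rcases v with x | x | x
      · exfalso; simp only [lv] at hv; split at hv <;> [omega; (split at hv <;> omega)]
      · obtain ⟨i, hi, rfl⟩ := lv_eq_zero (n+2) (by omega) x hv
        exact ⟨i, by omega, by simp [ANDb, hi]; rfl⟩
      · obtain ⟨i, hi, rfl⟩ := lv_eq_zero (n+2) (by omega) x hv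
        refine ⟨i + 2^(n+2), by omega, ?_⟩
        simp [ANDb]; rfl

instance : Fintype (ANDVert 1) := inferInstanceAs (Fintype (Fin 4))
instance : DecidableEq (ANDVert 1) := inferInstanceAs (DecidableEq (Fin 4))
instance : Fintype (ANDVert 2) := inferInstanceAs (Fintype (Fin 10))
instance : DecidableEq (ANDVert 2) := inferInstanceAs (DecidableEq (Fin 10))
instance ANDrel1dec : ∀ u v : ANDVert 1, Decidable (ANDrel 1 u v) := fun u v =>
  @instDecidableOr _ _ (@instDecidableAnd _ _ (instDecidableEqFin 4 u 0) (instDecidableEqFin 4 v 2))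
    (@instDecidableAnd _ _ (instDecidableEqFin 4 u 1) (instDecidableEqFin 4 v 3))
instance ANDrel2dec : ∀ u v : ANDVert 2, Decidable (ANDrel 2 u v) := fun u v =>
  AND2rel.dec u v
instance : ∀ u v : ANDVert 1, Decidable (ANDadj 1 u v) := fun _ _ => instDecidableOr
instance : ∀ u v : ANDVert 2, Decidable (ANDadj 2 u v) := fun _ _ => instDecidableOr
instance (u v : Fin 10) : Decidable (ANDadj 2 u v) := @instDecidableOr _ _ (AND2rel.dec u v) (AND2rel.dec v u)
instance (u : Fin 10) (v : ANDVert 2) : Decidable (ANDadj 2 u v) :=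
  @instDecidableOr _ _ (AND2rel.dec u v) (AND2rel.dec v u)
instance (u : ANDVert 2) (v : Fin 10) : Decidable (ANDadj 2 u v) :=
  @instDecidableOr _ _ (AND2rel.dec u v) (AND2rel.dec v u)
instance (x : Fin 10) (k : ℕ) : Decidable (lv 2 x = k) := Nat.decEq _ _
instance (x : Fin 10) (k : ℕ) : Decidable (lv 2 x + 1 = k) := Nat.decEq _ _
instance (x : Fin 10) (k : ℕ) : Decidable (k < lv 2 x) := Nat.decLt _ _

theorem lv_inl {n : ℕ} (x : Fin 10) :
    lv (n+3) (Sum.inl x) = lvD (n+2) + 1 + lv 2 x := by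
  simp only [lv]; split_ifs <;> omega

theorem lv_inrl {n : ℕ} (x : ANDVert (n+2)) :
    lv (n+3) (Sum.inr (Sum.inl x)) = lv (n+2) x := rfl

theorem lv_inrr {n : ℕ} (x : ANDVert (n+2)) :
    lv (n+3) (Sum.inr (Sum.inr x)) = lv (n+2) x := rfl

theorem adj_inl_inl {n : ℕ} {x y : Fin 10} :
    ANDadj (n+3) (Sum.inl x) (Sum.inl y) ↔ ANDadj 2 x y := Iff.rfl

theorem adj_inrl_inrl {n : ℕ} {x y : ANDVert (n+2)} :
    ANDadj (n+3) (Sum.inr (Sum.inl x)) (Sum.inr (Sum.inl y)) ↔ ANDadj (n+2) x y := Iff.rfl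

theorem adj_inrr_inrr {n : ℕ} {x y : ANDVert (n+2)} :
    ANDadj (n+3) (Sum.inr (Sum.inr x)) (Sum.inr (Sum.inr y)) ↔ ANDadj (n+2) x y := Iff.rfl

theorem adj_inl_inrl {n : ℕ} {x : Fin 10} {y : ANDVert (n+2)} :
    ANDadj (n+3) (Sum.inl x) (Sum.inr (Sum.inl y)) ↔
      ((x = 2 ∧ y = ANDa0 (n+2)) ∨ (x = 3 ∧ y = ANDa1 (n+2))) :=
  ⟨fun h => h.elim id False.elim, Or.inl⟩

theorem adj_inl_inrr {n : ℕ} {x : Fin 10} {y : ANDVert (n+2)} :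
    ANDadj (n+3) (Sum.inl x) (Sum.inr (Sum.inr y)) ↔
      ((x = 4 ∧ y = ANDa0 (n+2)) ∨ (x = 5 ∧ y = ANDa1 (n+2))) :=
  ⟨fun h => h.elim id False.elim, Or.inl⟩

theorem adj_inrl_inl {n : ℕ} {x : Fin 10} {y : ANDVert (n+2)} :
    ANDadj (n+3) (Sum.inr (Sum.inl y)) (Sum.inl x) ↔
      ((x = 2 ∧ y = ANDa0 (n+2)) ∨ (x = 3 ∧ y = ANDa1 (n+2))) :=
  ⟨fun h => h.elim False.elim id, Or.inr⟩

theorem adj_inrr_inl {n : ℕ} {x : Fin 10} {y : ANDVert (n+2)} :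
    ANDadj (n+3) (Sum.inr (Sum.inr y)) (Sum.inl x) ↔
      ((x = 4 ∧ y = ANDa0 (n+2)) ∨ (x = 5 ∧ y = ANDa1 (n+2))) :=
  ⟨fun h => h.elim False.elim id, Or.inr⟩

theorem adj_inrl_inrr {n : ℕ} {x y : ANDVert (n+2)} :
    ¬ ANDadj (n+3) (Sum.inr (Sum.inl x)) (Sum.inr (Sum.inr y)) := fun h => h.elim id id

theorem adj_inrr_inrl {n : ℕ} {x y : ANDVert (n+2)} :
    ¬ ANDadj (n+3) (Sum.inr (Sum.inr x)) (Sum.inr (Sum.inl y)) := fun h => h.elim id id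

theorem adj_symm {ℓ : ℕ} {u v : ANDVert ℓ} (h : ANDadj ℓ u v) : ANDadj ℓ v u := h.symm

theorem adj_lv2 : ∀ x y : Fin 10, ANDadj 2 x y → lv 2 x = lv 2 y + 1 ∨ lv 2 y = lv 2 x + 1 := by
  show ∀ x y : ANDVert 2, ANDadj 2 x y → lv 2 x = lv 2 y + 1 ∨ lv 2 y = lv 2 x + 1
  decide

theorem adj_lv : ∀ (ℓ : ℕ), 1 ≤ ℓ → ∀ u v : ANDVert ℓ, ANDadj ℓ u v →
    lv ℓ u = lv ℓ v + 1 ∨ lv ℓ v = lv ℓ u + 1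
  | 1, _ => by decide
  | 2, _ => adj_lv2
  | (n+3), _ => by
      intro u v h
      have h20 : lv 2 (2:Fin 10) = 0 := by decide
      have h30 : lv 2 (3:Fin 10) = 0 := by decide
      have h40 : lv 2 (4:Fin 10) = 0 := by decide
      have h50 : lv 2 (5:Fin 10) = 0 := by decide
      rcases u with x | x | x <;> rcases v with y | y | y
      · rw [lv_inl, lv_inl]
        rcases adj_lv2 x y (adj_inl_inl.mp h) with h' | h' <;> omega
      · rw [lv_inl, lv_inrl]
        rcases adj_inl_inrl.mp h with ⟨rfl, rfl⟩ | ⟨rfl, rfl⟩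
        · rw [h20, lv_a0]; left; omega
        · rw [h30, lv_a1]; left; omega
      · rw [lv_inl, lv_inrr]
        rcases adj_inl_inrr.mp h with ⟨rfl, rfl⟩ | ⟨rfl, rfl⟩
        · rw [h40, lv_a0]; left; omega
        · rw [h50, lv_a1]; left; omega
      · rw [lv_inl, lv_inrl]
        rcases adj_inrl_inl.mp h with ⟨rfl, rfl⟩ | ⟨rfl, rfl⟩
        · rw [h20, lv_a0]; right; omega
        · rw [h30, lv_a1]; right; omega
      · exact adj_lv (n+2) (by omega) x y (adj_inrl_inrl.mp h)
      · exact absurd h adj_inrl_inrr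
      · rw [lv_inl, lv_inrr]
        rcases adj_inrr_inl.mp h with ⟨rfl, rfl⟩ | ⟨rfl, rfl⟩
        · rw [h40, lv_a0]; right; omega
        · rw [h50, lv_a1]; right; omega
      · exact absurd h adj_inrr_inrl
      · exact adj_lv (n+2) (by omega) x y (adj_inrr_inrr.mp h)

theorem down_ex : ∀ (ℓ : ℕ), 1 ≤ ℓ → ∀ u : ANDVert ℓ, 0 < lv ℓ u →
    ∃ w, ANDadj ℓ u w ∧ lv ℓ w + 1 = lv ℓ u
  | 1, _ => by decide
  | 2, _ => by decide
  | (n+3), _ => by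
      intro u hu
      rcases u with x | x | x
      · -- top copy: choose the canonical lower neighbour
        clear hu
        by_cases hx : lv 2 x = 0
        · -- x ∈ {2,3,4,5}: go to a sub out-terminal
          have hx' : x = 2 ∨ x = 3 ∨ x = 4 ∨ x = 5 := by
            revert hx; revert x; decide
          rcases hx' with rfl | rfl | rfl | rfl
          · exact ⟨Sum.inr (Sum.inl (ANDa0 (n+2))), adj_inl_inrl.mpr (Or.inl ⟨rfl, rfl⟩),
              by rw [lv_inrl, lv_a0, lv_inl, hx]⟩
          · exact ⟨Sum.inr (Sum.inl (ANDa1 (n+2))), adj_inl_inrl.mpr (Or.inr ⟨rfl, rfl⟩),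
              by rw [lv_inrl, lv_a1, lv_inl, hx]⟩
          · exact ⟨Sum.inr (Sum.inr (ANDa0 (n+2))), adj_inl_inrr.mpr (Or.inl ⟨rfl, rfl⟩),
              by rw [lv_inrr, lv_a0, lv_inl, hx]⟩
          · exact ⟨Sum.inr (Sum.inr (ANDa1 (n+2))), adj_inl_inrr.mpr (Or.inr ⟨rfl, rfl⟩),
              by rw [lv_inrr, lv_a1, lv_inl, hx]⟩
        · -- x at positive level within the top copy
          have hz : ∃ z : Fin 10, ANDadj 2 x z ∧ lv 2 z + 1 = lv 2 x := by
            revert hx; revert x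
            show ∀ x : ANDVert 2, ¬lv 2 x = 0 → ∃ z : ANDVert 2, ANDadj 2 x z ∧ lv 2 z + 1 = lv 2 x
            decide
          obtain ⟨z, hz1, hz2⟩ := hz
          exact ⟨Sum.inl z, adj_inl_inl.mpr hz1, by rw [lv_inl, lv_inl]; omega⟩
      · obtain ⟨w, hw1, hw2⟩ := down_ex (n+2) (by omega) x hu
        exact ⟨Sum.inr (Sum.inl w), adj_inrl_inrl.mpr hw1, by rw [lv_inrl, lv_inrl]; exact hw2⟩
      · obtain ⟨w, hw1, hw2⟩ := down_ex (n+2) (by omega) x hu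
        exact ⟨Sum.inr (Sum.inr w), adj_inrr_inrr.mpr hw1, by rw [lv_inrr, lv_inrr]; exact hw2⟩

theorem lv_inj2 : ∀ x y : Fin 10, lv 2 x = lv 2 y → 0 < lv 2 x →
    (∀ z, lv 2 z + 1 = lv 2 x → (ANDadj 2 x z ↔ ANDadj 2 y z)) → x = y := by
  show ∀ x y : ANDVert 2, lv 2 x = lv 2 y → 0 < lv 2 x →
    (∀ z : ANDVert 2, lv 2 z + 1 = lv 2 x → (ANDadj 2 x z ↔ ANDadj 2 y z)) → x = y
  decide

theorem lv0cases : ∀ t : Fin 10, lv 2 t = 0 → t = 2 ∨ t = 3 ∨ t = 4 ∨ t = 5 := by decide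

theorem lv_inj : ∀ (ℓ : ℕ), 1 ≤ ℓ → ∀ u v : ANDVert ℓ, lv ℓ u = lv ℓ v → 0 < lv ℓ u →
    (∀ w, lv ℓ w + 1 = lv ℓ u → (ANDadj ℓ u w ↔ ANDadj ℓ v w)) → u = v
  | 1, _ => by decide
  | 2, _ => lv_inj2
  | (n+3), _ => by
      intro u v h0 hpos hw
      rcases u with x | x | x <;> rcases v with y | y | y
      · -- both in the top copy
        by_cases hx : lv 2 x = 0
        · have h0' : lv 2 y = 0 := by rw [lv_inl, lv_inl] at h0; omega
          rcases lv0cases x hx with rfl | rfl | rfl | rfl <;>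
              rcases lv0cases y h0' with rfl | rfl | rfl | rfl <;> try rfl
          · have h2 := (hw (Sum.inr (Sum.inl (ANDa0 (n+2))))
              (by rw [lv_inrl, lv_a0, lv_inl, hx])).mp (adj_inl_inrl.mpr (Or.inl ⟨rfl, rfl⟩))
            rcases adj_inl_inrl.mp h2 with ⟨h', he⟩ | ⟨h', he⟩ <;>
              first
                | exact absurd h' (by decide)
                | exact absurd he (a0_ne_a1 _)
                | exact absurd he.symm (a0_ne_a1 _)
          · have h2 := (hw (Sum.inr (Sum.inl (ANDa0 (n+2))))
              (by rw [lv_inrl, lv_a0, lv_inl, hx])).mp (adj_inl_inrl.mpr (Or.inl ⟨rfl, rfl⟩))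
            rcases adj_inl_inrl.mp h2 with ⟨h', he⟩ | ⟨h', he⟩ <;>
              first
                | exact absurd h' (by decide)
                | exact absurd he (a0_ne_a1 _)
                | exact absurd he.symm (a0_ne_a1 _)
          · have h2 := (hw (Sum.inr (Sum.inl (ANDa0 (n+2))))
              (by rw [lv_inrl, lv_a0, lv_inl, hx])).mp (adj_inl_inrl.mpr (Or.inl ⟨rfl, rfl⟩))
            rcases adj_inl_inrl.mp h2 with ⟨h', he⟩ | ⟨h', he⟩ <;>
              first
                | exact absurd h' (by decide)
                | exact absurd he (a0_ne_a1 _)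
                | exact absurd he.symm (a0_ne_a1 _)
          · have h2 := (hw (Sum.inr (Sum.inl (ANDa1 (n+2))))
              (by rw [lv_inrl, lv_a1, lv_inl, hx])).mp (adj_inl_inrl.mpr (Or.inr ⟨rfl, rfl⟩))
            rcases adj_inl_inrl.mp h2 with ⟨h', he⟩ | ⟨h', he⟩ <;>
              first
                | exact absurd h' (by decide)
                | exact absurd he (a0_ne_a1 _)
                | exact absurd he.symm (a0_ne_a1 _)
          · have h2 := (hw (Sum.inr (Sum.inl (ANDa1 (n+2))))
              (by rw [lv_inrl, lv_a1, lv_inl, hx])).mp (adj_inl_inrl.mpr (Or.inr ⟨rfl, rfl⟩))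
            rcases adj_inl_inrl.mp h2 with ⟨h', he⟩ | ⟨h', he⟩ <;>
              first
                | exact absurd h' (by decide)
                | exact absurd he (a0_ne_a1 _)
                | exact absurd he.symm (a0_ne_a1 _)
          · have h2 := (hw (Sum.inr (Sum.inl (ANDa1 (n+2))))
              (by rw [lv_inrl, lv_a1, lv_inl, hx])).mp (adj_inl_inrl.mpr (Or.inr ⟨rfl, rfl⟩))
            rcases adj_inl_inrl.mp h2 with ⟨h', he⟩ | ⟨h', he⟩ <;>
              first
                | exact absurd h' (by decide)
                | exact absurd he (a0_ne_a1 _)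
                | exact absurd he.symm (a0_ne_a1 _)
          · have h2 := (hw (Sum.inr (Sum.inr (ANDa0 (n+2))))
              (by rw [lv_inrr, lv_a0, lv_inl, hx])).mp (adj_inl_inrr.mpr (Or.inl ⟨rfl, rfl⟩))
            rcases adj_inl_inrr.mp h2 with ⟨h', he⟩ | ⟨h', he⟩ <;>
              first
                | exact absurd h' (by decide)
                | exact absurd he (a0_ne_a1 _)
                | exact absurd he.symm (a0_ne_a1 _)
          · have h2 := (hw (Sum.inr (Sum.inr (ANDa0 (n+2))))
              (by rw [lv_inrr, lv_a0, lv_inl, hx])).mp (adj_inl_inrr.mpr (Or.inl ⟨rfl, rfl⟩))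
            rcases adj_inl_inrr.mp h2 with ⟨h', he⟩ | ⟨h', he⟩ <;>
              first
                | exact absurd h' (by decide)
                | exact absurd he (a0_ne_a1 _)
                | exact absurd he.symm (a0_ne_a1 _)
          · have h2 := (hw (Sum.inr (Sum.inr (ANDa0 (n+2))))
              (by rw [lv_inrr, lv_a0, lv_inl, hx])).mp (adj_inl_inrr.mpr (Or.inl ⟨rfl, rfl⟩))
            rcases adj_inl_inrr.mp h2 with ⟨h', he⟩ | ⟨h', he⟩ <;>
              first
                | exact absurd h' (by decide)
                | exact absurd he (a0_ne_a1 _)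
                | exact absurd he.symm (a0_ne_a1 _)
          · have h2 := (hw (Sum.inr (Sum.inr (ANDa1 (n+2))))
              (by rw [lv_inrr, lv_a1, lv_inl, hx])).mp (adj_inl_inrr.mpr (Or.inr ⟨rfl, rfl⟩))
            rcases adj_inl_inrr.mp h2 with ⟨h', he⟩ | ⟨h', he⟩ <;>
              first
                | exact absurd h' (by decide)
                | exact absurd he (a0_ne_a1 _)
                | exact absurd he.symm (a0_ne_a1 _)
          · have h2 := (hw (Sum.inr (Sum.inr (ANDa1 (n+2))))
              (by rw [lv_inrr, lv_a1, lv_inl, hx])).mp (adj_inl_inrr.mpr (Or.inr ⟨rfl, rfl⟩))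
            rcases adj_inl_inrr.mp h2 with ⟨h', he⟩ | ⟨h', he⟩ <;>
              first
                | exact absurd h' (by decide)
                | exact absurd he (a0_ne_a1 _)
                | exact absurd he.symm (a0_ne_a1 _)
          · have h2 := (hw (Sum.inr (Sum.inr (ANDa1 (n+2))))
              (by rw [lv_inrr, lv_a1, lv_inl, hx])).mp (adj_inl_inrr.mpr (Or.inr ⟨rfl, rfl⟩))
            rcases adj_inl_inrr.mp h2 with ⟨h', he⟩ | ⟨h', he⟩ <;>
              first
                | exact absurd h' (by decide)
                | exact absurd he (a0_ne_a1 _)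
                | exact absurd he.symm (a0_ne_a1 _)
        · -- positive level inside the top copy
          have hxy : lv 2 x = lv 2 y := by rw [lv_inl, lv_inl] at h0; omega
          refine congrArg (fun t : Fin 10 => (Sum.inl t : ANDVert (n+3)))
            (lv_inj2 x y hxy (by omega) fun z hz => ?_)
          have hz' : lv (n+3) (Sum.inl z) + 1 = lv (n+3) (Sum.inl x) := by
            rw [lv_inl (x := z), lv_inl]; omega
          exact adj_inl_inl.symm.trans ((hw (Sum.inl z) hz').trans adj_inl_inl)
      · exact absurd h0 (by rw [lv_inl, lv_inrl]; have := lv_le (n+2) y; omega)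
      · exact absurd h0 (by rw [lv_inl, lv_inrr]; have := lv_le (n+2) y; omega)
      · exact absurd h0 (by rw [lv_inl, lv_inrl]; have := lv_le (n+2) x; omega)
      · refine congrArg (fun t : ANDVert (n+2) => (Sum.inr (Sum.inl t) : ANDVert (n+3)))
          (lv_inj (n+2) (by omega) x y h0 hpos fun w hwl => ?_)
        exact adj_inrl_inrl.symm.trans ((hw (Sum.inr (Sum.inl w)) hwl).trans adj_inrl_inrl)
      · obtain ⟨w, hw1, hw2⟩ := down_ex (n+2) (by omega) x hpos
        exact absurd ((hw (Sum.inr (Sum.inl w)) hw2).mp (adj_inrl_inrl.mpr hw1)) adj_inrr_inrl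
      · exact absurd h0 (by rw [lv_inl, lv_inrr]; have := lv_le (n+2) x; omega)
      · obtain ⟨w, hw1, hw2⟩ := down_ex (n+2) (by omega) x hpos
        exact absurd ((hw (Sum.inr (Sum.inr w)) hw2).mp (adj_inrr_inrr.mpr hw1)) adj_inrl_inrr
      · refine congrArg (fun t : ANDVert (n+2) => (Sum.inr (Sum.inr t) : ANDVert (n+3)))
          (lv_inj (n+2) (by omega) x y h0 hpos fun w hwl => ?_)
        exact adj_inrr_inrr.symm.trans ((hw (Sum.inr (Sum.inr w)) hwl).trans adj_inrr_inrr)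

theorem adjGraph_iff {ℓ : ℕ} (hℓ : 1 ≤ ℓ) {u v : ANDVert ℓ} :
    (ANDgraph ℓ).Adj u v ↔ ANDadj ℓ u v := by
  rw [ANDgraph, SimpleGraph.fromRel_adj]
  constructor
  · exact fun h => h.2
  · intro h
    refine ⟨?_, h⟩
    rintro rfl
    rcases adj_lv ℓ hℓ u u h with h' | h' <;> omega

theorem stable_discrete (ℓ : ℕ) (hℓ : 1 ≤ ℓ) (π : Setoid (ANDVert ℓ))
    (hst : IsStable (ANDgraph ℓ) π) (hcl : Closed π (ANDins ℓ))
    (hB : ∀ i < 2^ℓ, ∀ j < 2^ℓ, π.r (ANDb ℓ i) (ANDb ℓ j) → i = j) :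
    ∀ u v, π.r u v → u = v := by
  classical
  suffices h : ∀ k u v, lv ℓ u ≤ k → π.r u v → u = v by
    exact fun u v hr => h (lv ℓ u) u v le_rfl hr
  intro k
  induction k with
  | zero =>
    intro u v hu hr
    obtain ⟨i, hi, rfl⟩ := lv_eq_zero ℓ hℓ u (by omega)
    have hvB : v ∈ ANDins ℓ := (hcl _ _ hr).mp ⟨i, hi, rfl⟩
    obtain ⟨j, hj, rfl⟩ := hvB
    exact congrArg (ANDb ℓ) (hB i hi j hj hr)
  | succ k ih =>
    intro u v hu hr
    by_cases hku : lv ℓ u ≤ k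
    · exact ih u v hku hr
    have hlu : lv ℓ u = k + 1 := by omega
    have hcell : ∀ w, lv ℓ w ≤ k → {x | π.r x w} = {w} := by
      intro w hwk
      ext x
      simp only [Set.mem_setOf_eq, Set.mem_singleton_iff]
      exact ⟨fun h => (ih w x hwk (π.iseqv.symm h)).symm, fun h => h ▸ π.iseqv.refl x⟩
    have hdeg : ∀ w, lv ℓ w ≤ k → ∀ z,
        cellDeg (ANDgraph ℓ) π z w = if (ANDgraph ℓ).Adj z w then 1 else 0 := by
      intro w hwk z
      rw [cellDeg, hcell w hwk]
      by_cases hA : (ANDgraph ℓ).Adj z w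
      · have hsub : (ANDgraph ℓ).neighborSet z ∩ {w} = {w} := by
          apply Set.inter_eq_self_of_subset_right
          intro t ht
          rw [Set.mem_singleton_iff] at ht
          subst ht
          exact hA
        rw [hsub, if_pos hA, Set.ncard_singleton]
      · have hsub : (ANDgraph ℓ).neighborSet z ∩ {w} = ∅ :=
          Set.inter_singleton_eq_empty.mpr hA
        rw [hsub, if_neg hA, Set.ncard_empty]
    rcases Nat.lt_or_ge k (lv ℓ v) with h1 | h1
    swap
    · exact (ih v u h1 (π.iseqv.symm hr)).symm
    have hlv : lv ℓ v = k + 1 := by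
      by_contra hne
      obtain ⟨w, hw1, hw2⟩ := down_ex ℓ hℓ u (by omega)
      have hAuw : (ANDgraph ℓ).Adj u w := (adjGraph_iff hℓ).mpr hw1
      have heq := hst u v hr w
      have hnA : ¬ (ANDgraph ℓ).Adj v w := by
        intro hA
        rcases adj_lv ℓ hℓ v w ((adjGraph_iff hℓ).mp hA) with h' | h' <;> omega
      rw [hdeg w (by omega) u, hdeg w (by omega) v, if_pos hAuw, if_neg hnA] at heq
      exact one_ne_zero heq
    refine lv_inj ℓ hℓ u v (by omega) (by omega) fun w hwl => ?_
    have heq := hst u v hr w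
    rw [hdeg w (by omega) u, hdeg w (by omega) v] at heq
    have hiff : (ANDgraph ℓ).Adj u w ↔ (ANDgraph ℓ).Adj v w := by
      by_cases hA : (ANDgraph ℓ).Adj u w <;> by_cases hA' : (ANDgraph ℓ).Adj v w <;>
        simp [hA, hA'] at heq ⊢
    exact ((adjGraph_iff hℓ).symm.trans hiff).trans (adjGraph_iff hℓ)

/-- Let `ℓ ≥ 1` and let `π` be a stable partition of `AND_ℓ` such that
the set `B` of in-terminals is `π`-closed and `π` induces on `B` a partition into binary
blocks.  If `π` does not distinguish the out-terminals `a₀, a₁`, then some in-terminal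
pair `(b_{2p}, b_{2p+1})` is not distinguished by `π`. -/
theorem AND_gadget_out_in (ℓ : ℕ) (hℓ : 1 ≤ ℓ) (π : Setoid (ANDVert ℓ))
    (hst : IsStable (ANDgraph ℓ) π) (hcl : Closed π (ANDins ℓ))
    (hbb : ∃ ψ : Set (Set (ANDVert ℓ)), IsBinBlockPartition ℓ ψ ∧ AgreesWith π ψ)
    (ha : π.r (ANDa0 ℓ) (ANDa1 ℓ)) :
    ∃ p < 2 ^ (ℓ - 1), π.r (ANDb ℓ (2 * p)) (ANDb ℓ (2 * p + 1)) := by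
  by_contra hno
  push_neg at hno
  obtain ⟨ψ, ⟨hcells, hun, _⟩, hag⟩ := hbb
  have hB : ∀ i < 2^ℓ, ∀ j < 2^ℓ, π.r (ANDb ℓ i) (ANDb ℓ j) → i = j := by
    intro i hi j hj hr
    have hiB : ANDb ℓ i ∈ ⋃₀ ψ := by rw [hun]; exact ⟨i, hi, rfl⟩
    have hjB : ANDb ℓ j ∈ ⋃₀ ψ := by rw [hun]; exact ⟨j, hj, rfl⟩
    obtain ⟨C, hC, hiC, hjC⟩ := (hag _ hiB _ hjB).mp hr
    obtain ⟨j0, hj0, q, hq, rfl⟩ := hcells C hC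
    by_cases hj0l : j0 = ℓ
    · rw [hj0l, binBlock, Nat.sub_self, pow_zero, mul_one, mul_one] at hiC hjC
      obtain ⟨i', hi', hbi⟩ := hiC
      obtain ⟨j', hj', hbj⟩ := hjC
      rw [Set.mem_Ico] at hi' hj'
      rw [hj0l] at hq
      have h1 := b_inj ℓ hℓ i hi i' (by omega) hbi.symm
      have h2 := b_inj ℓ hℓ j hj j' (by omega) hbj.symm
      omega
    · have hj0' : j0 < ℓ := lt_of_le_of_ne hj0 hj0l
      set t := ℓ - j0 with ht
      have ht1 : 1 ≤ t := by omega
      have htwot : 2 ≤ 2^t := by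
        calc (2:ℕ) = 2^1 := (pow_one 2).symm
        _ ≤ 2^t := Nat.pow_le_pow_right (by norm_num) ht1
      set p := q * 2^(t-1) with hp
      have hsplit : (2:ℕ)^t = 2 * 2^(t-1) := by
        conv_lhs => rw [show t = (t-1)+1 by omega]
        rw [pow_succ]; ring
      have hpow : (2:ℕ)^j0 * 2^(t-1) = 2^(ℓ-1) := by
        rw [← pow_add]; congr 1; omega
    -- p < 2^(ℓ-1)
      have hppos : 0 < (2:ℕ)^(t-1) := pow_pos (by norm_num) _
      have hpl : p < 2^(ℓ-1) := by
        rw [hp, ← hpow]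
        exact Nat.mul_lt_mul_of_lt_of_le hq le_rfl hppos
      have h2p : 2 * p = q * 2^t := by rw [hp, hsplit]; ring
      have hm1 : ANDb ℓ (2*p) ∈ binBlock ℓ j0 q := by
        refine ⟨2*p, ?_, rfl⟩
        rw [Set.mem_Ico, add_mul, one_mul]
        simp only [← ht]
        omega
      have hm2 : ANDb ℓ (2*p+1) ∈ binBlock ℓ j0 q := by
        refine ⟨2*p+1, ?_, rfl⟩
        rw [Set.mem_Ico, add_mul, one_mul]
        simp only [← ht]
        omega
      have hr' : π.r (ANDb ℓ (2*p)) (ANDb ℓ (2*p+1)) :=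
        (hag _ ⟨_, hC, hm1⟩ _ ⟨_, hC, hm2⟩).mpr ⟨_, hC, hm1, hm2⟩
      exact absurd hr' (hno p hpl)
  exact a0_ne_a1 ℓ (stable_discrete ℓ hℓ π hst hcl hB _ _ ha)
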